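/- Let t_x = exp(i β_x), t_y = exp(i β_y). For D_x = D'_x = (t_x − 1)(t_x + 1)/(2 t_x Δx) and D_y = D'_y = (t_y − 1)(t_y + 1)/(2 t_y Δx), one has D_x·D'_x + D_y·D'_y = (cos²β_x − 1 + cos²β_y − 1)/Δx², and the stability condition |1 + (Δt²/2)(D_x D'_x + D_y D'_y)| ≤ 1 for all β_x, β_y ∈ ℝ is equivalent to Δt/Δx ≤ √2. -/

import Mathlib

lemma aux_sq (Δx : ℝ) (hΔx : Δx ≠ 0) (β : ℝ) :
    (Complex.exp (Complex.I * β) - 1) * (Complex.exp (Complex.I * β) + 1)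
      / (2 * Complex.exp (Complex.I * β) * Δx)
    * ((Complex.exp (Complex.I * β) - 1) * (Complex.exp (Complex.I * β) + 1)
      / (2 * Complex.exp (Complex.I * β) * Δx))
    = (((Real.cos β ^ 2 - 1) / Δx ^ 2 : ℝ) : ℂ) := by
  have ht : Complex.exp (Complex.I * β) ≠ 0 := Complex.exp_ne_zero _
  have hx : (Δx : ℂ) ≠ 0 := by exact_mod_cast hΔx
  have h : Complex.exp (Complex.I * (β:ℂ)) = (Real.cos β : ℂ) + (Real.sin β : ℂ) * Complex.I := by
    rw [mul_comm, Complex.exp_mul_I, Complex.ofReal_cos, Complex.ofReal_sin]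
  have hs : (Real.sin β : ℂ) ^ 2 + (Real.cos β : ℂ) ^ 2 = 1 := by
    exact_mod_cast Real.sin_sq_add_cos_sq β
  have key : (Complex.exp (Complex.I * β) - 1) * (Complex.exp (Complex.I * β) + 1)
      = 2 * Complex.I * (Real.sin β : ℂ) * Complex.exp (Complex.I * β) := by
    rw [h]
    linear_combination hs - ((Real.sin β : ℂ) ^ 2) * Complex.I_sq
  rw [key]
  push_cast
  field_simp
  have hs' : Complex.sin β ^ 2 + Complex.cos β ^ 2 = 1 := Complex.sin_sq_add_cos_sq _
  linear_combination (-(1:ℂ)) * hs'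
    + (Complex.sin β ^2) * Complex.I_sq

/-- Central sequential explicit (FVTD) scheme: symbol identity and stability
condition `Δt/Δx ≤ √2`. -/
theorem stmt_8 (Δt Δx : ℝ) (hΔt : 0 < Δt) (hΔx : 0 < Δx)
    (tx ty Dx Dy D'x D'y : ℝ → ℝ → ℂ)
    (htx : ∀ βx βy, tx βx βy = Complex.exp (Complex.I * βx))
    (hty : ∀ βx βy, ty βx βy = Complex.exp (Complex.I * βy))
    (hDx : ∀ βx βy, Dx βx βy = (tx βx βy - 1) * (tx βx βy + 1) / (2 * tx βx βy * Δx))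
    (hDy : ∀ βx βy, Dy βx βy = (ty βx βy - 1) * (ty βx βy + 1) / (2 * ty βx βy * Δx))
    (hD'x : ∀ βx βy, D'x βx βy = Dx βx βy)
    (hD'y : ∀ βx βy, D'y βx βy = Dy βx βy) :
    (∀ βx βy, Dx βx βy * D'x βx βy + Dy βx βy * D'y βx βy
        = (((Real.cos βx ^ 2 - 1 + (Real.cos βy ^ 2 - 1)) / Δx ^ 2 : ℝ) : ℂ)) ∧
    ((∀ βx βy, ‖(1 + ((Δt : ℂ) ^ 2 / 2)
        * (Dx βx βy * D'x βx βy + Dy βx βy * D'y βx βy))‖ ≤ 1)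
      ↔ Δt / Δx ≤ Real.sqrt 2) := by
  have hxne : Δx ≠ 0 := ne_of_gt hΔx
  have hx2 : (0:ℝ) < Δx ^ 2 := by positivity
  have h1 : ∀ βx βy, Dx βx βy * D'x βx βy + Dy βx βy * D'y βx βy
      = (((Real.cos βx ^ 2 - 1 + (Real.cos βy ^ 2 - 1)) / Δx ^ 2 : ℝ) : ℂ) := by
    intro βx βy
    rw [hD'x, hD'y, hDx, hDy, htx, hty, aux_sq Δx hxne βx, aux_sq Δx hxne βy]
    push_cast
    ring
  refine ⟨h1, ?_⟩
  have habs : ∀ βx βy, ‖(1 + ((Δt : ℂ) ^ 2 / 2)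
      * (Dx βx βy * D'x βx βy + Dy βx βy * D'y βx βy))‖
      = |1 + Δt ^ 2 / 2 * ((Real.cos βx ^ 2 - 1 + (Real.cos βy ^ 2 - 1)) / Δx ^ 2)| := by
    intro βx βy
    rw [h1]
    rw [show (1 + ((Δt : ℂ) ^ 2 / 2)
        * (((Real.cos βx ^ 2 - 1 + (Real.cos βy ^ 2 - 1)) / Δx ^ 2 : ℝ) : ℂ))
      = (((1 + Δt ^ 2 / 2 * ((Real.cos βx ^ 2 - 1 + (Real.cos βy ^ 2 - 1)) / Δx ^ 2) : ℝ)) : ℂ)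
      by push_cast; ring]
    rw [Complex.norm_real, Real.norm_eq_abs]
  constructor
  · intro h
    have h2 := h (Real.pi / 2) (Real.pi / 2)
    rw [habs, Real.cos_pi_div_two] at h2
    rw [abs_le] at h2
    have h3 := h2.1
    rw [show Δt ^ 2 / 2 * (((0:ℝ) ^ 2 - 1 + ((0:ℝ) ^ 2 - 1)) / Δx ^ 2)
        = -(Δt ^ 2 / Δx ^ 2) by ring] at h3
    rw [Real.le_sqrt (by positivity) (by norm_num), div_pow]
    linarith
  · intro h βx βy
    rw [habs, abs_le]
    have hsq : Δt ^ 2 ≤ 2 * Δx ^ 2 := by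
      have h4 := (Real.le_sqrt (by positivity) (by norm_num)).mp h
      rw [div_pow, div_le_iff₀ hx2] at h4
      linarith
    have hcx : Real.cos βx ^ 2 ≤ 1 := by nlinarith [Real.neg_one_le_cos βx, Real.cos_le_one βx]
    have hcy : Real.cos βy ^ 2 ≤ 1 := by nlinarith [Real.neg_one_le_cos βy, Real.cos_le_one βy]
    have hcx0 : 0 ≤ Real.cos βx ^ 2 := sq_nonneg _
    have hcy0 : 0 ≤ Real.cos βy ^ 2 := sq_nonneg _
    set r : ℝ := Real.cos βx ^ 2 - 1 + (Real.cos βy ^ 2 - 1) with hr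
    have key : -2 ≤ Δt ^ 2 / 2 * (r / Δx ^ 2) := by
      rw [show Δt ^ 2 / 2 * (r / Δx ^ 2) = (Δt ^ 2 * r) / (2 * Δx ^ 2) by ring,
        le_div_iff₀ (by positivity)]
      nlinarith [mul_nonneg (sq_nonneg Δt) (show (0:ℝ) ≤ r + 2 by simp [hr]; linarith)]
    have key2 : Δt ^ 2 / 2 * (r / Δx ^ 2) ≤ 0 := by
      apply mul_nonpos_of_nonneg_of_nonpos (by positivity)
      apply div_nonpos_of_nonpos_of_nonneg (by simp [hr]; linarith) (by positivity)
    constructor <;> [linarith; linarith]
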